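/- Let K and J be nonempty sets and f : K × J → ℝ a strictly positive function such that for all A, B ∈ J the supremum sup_{P∈K} f(P,A)/f(P,B) is finite. Fix A, B ∈ J. Then d^s(A,B) = 0 if and only if the function P ↦ g_{AB}(P) is constant on K. Consequently, if f is an effective influence, i.e., for every pair A ≠ B in J the function P ↦ g_{AB}(P) is non-constant on K, then d^s(A,B) > 0 whenever A ≠ B, so d^s is a distance on J. -/

import Mathlib

/-- `dˢ(A,B) = 0` iff `g_{AB}` is constant on `K`; consequently, for an effective
influence (`g_{AB}` non-constant whenever `A ≠ B`), `dˢ` is positive off the diagonal,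
hence a distance. -/
theorem barbilian_extended_eff_distance {K J : Type*} [Nonempty K] [Nonempty J]
    (f : K → J → ℝ) (hf : ∀ P A, 0 < f P A)
    (hbdd : ∀ A B : J, BddAbove (Set.range fun P => f P A / f P B)) :
    let ds : J → J → ℝ := fun A B =>
      Real.log (sSup (Set.range fun P => f P A / f P B) /
        sInf (Set.range fun P => f P A / f P B))
    (∀ A B : J, ds A B = 0 ↔ ∀ P Q : K, f P A / f P B = f Q A / f Q B) ∧
    ((∀ A B : J, A ≠ B → ¬ (∀ P Q : K, f P A / f P B = f Q A / f Q B)) →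
      ∀ A B : J, A ≠ B → 0 < ds A B) := by
  intro ds
  obtain ⟨P₀⟩ := ‹Nonempty K›
  have hne : ∀ A B : J, (Set.range fun P => f P A / f P B).Nonempty := fun A B =>
    Set.range_nonempty _
  have hinf_pos : ∀ A B : J, 0 < sInf (Set.range fun P => f P A / f P B) := by
    intro A B
    set T := sSup (Set.range fun P => f P B / f P A) with hT
    have hTpos : 0 < T := lt_of_lt_of_le (div_pos (hf P₀ B) (hf P₀ A))
      (le_csSup (hbdd B A) ⟨P₀, rfl⟩)
    have hlb : 1 / T ≤ sInf (Set.range fun P => f P A / f P B) := by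
      apply le_csInf (hne A B)
      rintro x ⟨P, rfl⟩
      rw [one_div_le hTpos (div_pos (hf P A) (hf P B))]
      calc 1 / (f P A / f P B) = f P B / f P A := one_div_div _ _
        _ ≤ T := le_csSup (hbdd B A) ⟨P, rfl⟩
    exact lt_of_lt_of_le (by positivity) hlb
  have hlohi : ∀ A B : J, sInf (Set.range fun P => f P A / f P B)
      ≤ sSup (Set.range fun P => f P A / f P B) := by
    intro A B
    exact csInf_le_csSup (hne A B) ⟨0, by rintro x ⟨P, rfl⟩; exact (div_pos (hf P A) (hf P B)).le⟩
      (hbdd A B)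
  have key : ∀ A B : J, ds A B = 0 ↔ ∀ P Q : K, f P A / f P B = f Q A / f Q B := by
    intro A B
    set S := Set.range fun P => f P A / f P B with hS
    have hip := hinf_pos A B
    have hle := hlohi A B
    constructor
    · intro h P Q
      have hratio : 1 ≤ sSup S / sInf S := (one_le_div hip).mpr hle
      have : sSup S / sInf S = 1 := by
        rcases Real.log_eq_zero.mp h with h1 | h1 | h1 <;> linarith
      have heq : sSup S = sInf S := by
        have := (div_eq_one_iff_eq (show sInf S ≠ 0 from hip.ne')).mp this; linarith
      have hbb : BddBelow S := ⟨0, by rintro y ⟨P', rfl⟩; exact (div_pos (hf P' A) (hf P' B)).le⟩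
      have hall : ∀ x ∈ S, x = sInf S := by
        intro x hx
        have h1 := csInf_le hbb hx
        have h2 := le_csSup (hbdd A B) hx
        linarith
      have e1 := hall (f P A / f P B) ⟨P, rfl⟩
      have e2 := hall (f Q A / f Q B) ⟨Q, rfl⟩
      rw [e1, e2]
    · intro h
      have hsub : S = {f P₀ A / f P₀ B} := by
        apply Set.eq_singleton_iff_unique_mem.mpr
        exact ⟨⟨P₀, rfl⟩, by rintro x ⟨P, rfl⟩; exact h P P₀⟩
      have heq : sSup S = sInf S := by
        rw [hsub, csSup_singleton, csInf_singleton]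
      show Real.log (sSup S / sInf S) = 0
      rw [heq, div_self hip.ne', Real.log_one]
  refine ⟨key, ?_⟩
  intro heff A B hAB
  have hne0 : ds A B ≠ 0 := fun h => heff A B hAB ((key A B).mp h)
  have hnn : 0 ≤ ds A B :=
    Real.log_nonneg ((one_le_div (hinf_pos A B)).mpr (hlohi A B))
  exact lt_of_le_of_ne hnn (Ne.symm hne0)
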